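/- The TriAT-style color refinement is strictly more expressive than the 1-WL test: TriAT refinement distinguishes the disjoint union of two triangles from the 6-cycle (since in the former every vertex has an edge among its neighbors, in the latter none does), while 1-WL does not distinguish them. -/

import Mathlib

open SimpleGraph

def WLColor : ℕ → Type
  | 0 => Unit
  | n + 1 => WLColor n × Multiset (WLColor n)

/-- 1-WL refinement: `c'(u) = (c(u), {{c(v) : v ∈ N(u)}})`. -/
def wlColoring {V : Type} [Fintype V] (G : SimpleGraph V) [DecidableRel G.Adj] :
    (n : ℕ) → V → WLColor n
  | 0, _ => ()
  | n + 1, u => (wlColoring G n u, (G.neighborFinset u).val.map (wlColoring G n))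

def TriColor : ℕ → Type
  | 0 => Unit
  | n + 1 => TriColor n × Multiset (TriColor n) × Multiset (TriColor n × TriColor n)

/-- TriAT refinement: additionally aggregates the multiset of color-pairs of
adjacent pairs of neighbors. -/
def triColoring {V : Type} [Fintype V] [DecidableEq V]
    (G : SimpleGraph V) [DecidableRel G.Adj] :
    (n : ℕ) → V → TriColor n
  | 0, _ => ()
  | n + 1, u =>
      (triColoring G n u,
       (G.neighborFinset u).val.map (triColoring G n),
       (((G.neighborFinset u) ×ˢ (G.neighborFinset u)).filter
          (fun p => G.Adj p.1 p.2)).val.map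
         (fun p => (triColoring G n p.1, triColoring G n p.2)))

/-- Two disjoint triangles. -/
def TwoTriangles : SimpleGraph (Fin 6) where
  Adj i j := i ≠ j ∧ (i : ℕ) / 3 = (j : ℕ) / 3
  symm := ⟨fun _ _ h => ⟨h.1.symm, h.2.symm⟩⟩
  loopless := ⟨fun _ h => h.1 rfl⟩

instance : DecidableRel TwoTriangles.Adj :=
  fun i j => inferInstanceAs (Decidable (i ≠ j ∧ (i : ℕ) / 3 = (j : ℕ) / 3))

/-- A 6-cycle. -/
def SixCycle : SimpleGraph (ZMod 6) where
  Adj i j := i - j = 1 ∨ j - i = 1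
  symm := ⟨fun _ _ h => h.symm⟩
  loopless := ⟨fun i h => by simp only [sub_self] at h; exact absurd h (by decide)⟩

instance : DecidableRel SixCycle.Adj :=
  fun i j => inferInstanceAs (Decidable (i - j = 1 ∨ j - i = 1))

instance decEqTriColor : (n : ℕ) → DecidableEq (TriColor n)
  | 0 => inferInstanceAs (DecidableEq Unit)
  | n + 1 =>
      have := decEqTriColor n
      inferInstanceAs (DecidableEq (TriColor n × Multiset (TriColor n) ×
        Multiset (TriColor n × TriColor n)))

lemma degTT : ∀ u : Fin 6, (TwoTriangles.neighborFinset u).val.card = 2 := by decide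

lemma degSC : ∀ u : ZMod 6, (SixCycle.neighborFinset u).val.card = 2 := by decide

lemma wl_const : ∀ n : ℕ, ∃ c : WLColor n,
    (∀ u : Fin 6, wlColoring TwoTriangles n u = c) ∧
    (∀ v : ZMod 6, wlColoring SixCycle n v = c) := by
  intro n
  induction n with
  | zero => exact ⟨(), fun _ => rfl, fun _ => rfl⟩
  | succ n ih =>
      obtain ⟨c, h1, h2⟩ := ih
      refine ⟨(c, Multiset.replicate 2 c), fun u => ?_, fun v => ?_⟩
      · simp only [wlColoring]
        rw [h1, Multiset.map_congr rfl (fun x _ => h1 x), Multiset.map_const', degTT]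
      · simp only [wlColoring]
        rw [h2, Multiset.map_congr rfl (fun x _ => h2 x), Multiset.map_const', degSC]

/-- TriAT-style refinement is strictly more expressive than the 1-WL test:
1-WL does not distinguish two disjoint triangles from the 6-cycle (the multisets
of colors agree at every round), but TriAT refinement does distinguish them
(at some round the multisets of TriAT colors differ). -/
theorem triat_strictly_more_expressive_than_wl :
    (∀ n : ℕ,
      (Finset.univ.val.map (wlColoring TwoTriangles n)) =
        (Finset.univ.val.map (wlColoring SixCycle n))) ∧
    (∃ n : ℕ,
      (Finset.univ.val.map (triColoring TwoTriangles n)) ≠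
        (Finset.univ.val.map (triColoring SixCycle n))) := by
  constructor
  · intro n
    obtain ⟨c, h1, h2⟩ := wl_const n
    rw [Multiset.map_congr rfl (fun x _ => h1 x),
        Multiset.map_congr rfl (fun x _ => h2 x),
        Multiset.map_const', Multiset.map_const']
    rfl
  · exact ⟨1, by decide⟩
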